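/- For any γ ∈ ℝ, the Baouendi-Grushin Laplacian of ρ^γ satisfies Δ_X(ρ^γ) = γ(Q − 2 + γ) ρ^{γ−2} ψ on {x ≠ 0}; in particular Δ_X(ρ^{−4}) = −4(Q − 6) ρ^{−6} ψ. -/

import Mathlib

open MeasureTheory Real

noncomputable section

abbrev E (m n : ℕ) := EuclideanSpace ℝ (Fin m) × EuclideanSpace ℝ (Fin n)

/-- The gauge norm `ρ(x,y) = (|x|^{2(α+1)} + (α+1)²|y|²)^{1/(2(α+1))}`. -/
def rho {m n : ℕ} (α : ℝ) (z : E m n) : ℝ :=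
  (‖z.1‖ ^ (2*(α+1)) + (α+1)^2 * ‖z.2‖^2) ^ (1/(2*(α+1)))

/-- The angle function `ψ = |x|^{2α}/ρ^{2α}`. -/
def psi {m n : ℕ} (α : ℝ) (z : E m n) : ℝ :=
  ‖z.1‖ ^ (2*α) / (rho α z) ^ (2*α)

/-- The gauge ball of radius `r`. -/
def gball {m n : ℕ} (α r : ℝ) : Set (E m n) := {z | rho α z < r}

/-- The gauge sphere of radius `r`. -/
def gsphere {m n : ℕ} (α r : ℝ) : Set (E m n) := {z | rho α z = r}

/-- Squared norm of the Baouendi-Grushin gradient `∇_X u = (∇_x u, |x|^α ∇_y u)`. -/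
def gradXsq {m n : ℕ} (α : ℝ) (u : E m n → ℝ) (z : E m n) : ℝ :=
  (∑ i, (fderiv ℝ u z (EuclideanSpace.single i 1, 0))^2)
  + ‖z.1‖ ^ (2*α) * (∑ j, (fderiv ℝ u z (0, EuclideanSpace.single j 1))^2)

/-- The Baouendi-Grushin Laplacian `Δ_X u = Δ_x u + |x|^{2α} Δ_y u`. -/
def lapX {m n : ℕ} (α : ℝ) (u : E m n → ℝ) (z : E m n) : ℝ :=
  (∑ i, fderiv ℝ (fun w => fderiv ℝ u w (EuclideanSpace.single i 1, 0)) z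
      (EuclideanSpace.single i 1, 0))
  + ‖z.1‖ ^ (2*α) *
    (∑ j, fderiv ℝ (fun w => fderiv ℝ u w (0, EuclideanSpace.single j 1)) z
      (0, EuclideanSpace.single j 1))

/-- The generator of anisotropic dilations `Zu = x·∇_x u + (α+1) y·∇_y u`. -/
def Zop {m n : ℕ} (α : ℝ) (u : E m n → ℝ) (z : E m n) : ℝ :=
  fderiv ℝ u z (z.1, (α+1) • z.2)

/-- Euclidean norm of the full gradient of `ρ`. -/
def normGradRho {m n : ℕ} (α : ℝ) (z : E m n) : ℝ :=
  Real.sqrt ((∑ i, (fderiv ℝ (rho α) z (EuclideanSpace.single i 1, 0))^2)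
    + (∑ j, (fderiv ℝ (rho α) z (0, EuclideanSpace.single j 1))^2))


namespace BG

variable {m n : ℕ}

def gX (w : E m n) : ℝ := ∑ i, w.1 i * w.1 i

def gY (w : E m n) : ℝ := ∑ j, w.2 j * w.2 j

def Fg (α : ℝ) (w : E m n) : ℝ := gX w ^ (α+1) + (α+1)^2 * gY w

def cx (i : Fin m) : E m n →L[ℝ] ℝ :=
  (EuclideanSpace.proj i).comp (ContinuousLinearMap.fst ℝ _ _)

def cy (j : Fin n) : E m n →L[ℝ] ℝ :=
  (EuclideanSpace.proj j).comp (ContinuousLinearMap.snd ℝ _ _)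

lemma cx_apply (i : Fin m) (v : E m n) : cx i v = v.1 i := rfl

lemma cy_apply (j : Fin n) (v : E m n) : cy j v = v.2 j := rfl

def LX (w : E m n) : E m n →L[ℝ] ℝ := ∑ i, (2 * w.1 i) • cx i

def LY (w : E m n) : E m n →L[ℝ] ℝ := ∑ j, (2 * w.2 j) • cy j

def LF (α : ℝ) (w : E m n) : E m n →L[ℝ] ℝ :=
  ((α+1) * gX w ^ α) • LX w + ((α+1)^2 : ℝ) • LY w

lemma gX_eq (w : E m n) : gX w = ‖w.1‖^2 := by
  rw [EuclideanSpace.norm_eq, Real.sq_sqrt (Finset.sum_nonneg fun i _ => sq_nonneg _)]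
  simp [gX, Real.norm_eq_abs, sq, abs_mul_abs_self]

lemma gY_eq (w : E m n) : gY w = ‖w.2‖^2 := by
  rw [EuclideanSpace.norm_eq, Real.sq_sqrt (Finset.sum_nonneg fun i _ => sq_nonneg _)]
  simp [gY, Real.norm_eq_abs, sq, abs_mul_abs_self]

lemma gX_pos {w : E m n} (hw : w.1 ≠ 0) : 0 < gX w := by
  rw [gX_eq]; exact pow_pos (norm_pos_iff.mpr hw) 2

lemma gX_nonneg (w : E m n) : 0 ≤ gX w := Finset.sum_nonneg fun _ _ => mul_self_nonneg _

lemma gY_nonneg (w : E m n) : 0 ≤ gY w := Finset.sum_nonneg fun _ _ => mul_self_nonneg _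

lemma Fg_nonneg (α : ℝ) (w : E m n) : 0 ≤ Fg α w :=
  add_nonneg (Real.rpow_nonneg (gX_nonneg w) _) (mul_nonneg (sq_nonneg _) (gY_nonneg w))

lemma Fg_pos {α : ℝ} {w : E m n} (hw : w.1 ≠ 0) : 0 < Fg α w :=
  add_pos_of_pos_of_nonneg (Real.rpow_pos_of_pos (gX_pos hw) _)
    (mul_nonneg (sq_nonneg _) (gY_nonneg w))

lemma rho_eq (α : ℝ) (w : E m n) : rho α w = Fg α w ^ (1/(2*(α+1))) := by
  unfold rho Fg
  rw [Real.rpow_mul (norm_nonneg _), Real.rpow_two, ← gX_eq, ← gY_eq]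

lemma rho_rpow (α : ℝ) (γ : ℝ) (w : E m n) :
    rho α w ^ γ = Fg α w ^ (γ/(2*(α+1))) := by
  rw [rho_eq, ← Real.rpow_mul (Fg_nonneg α w)]
  congr 1
  ring

lemma LX_sx (w : E m n) (k : Fin m) :
    LX w ((EuclideanSpace.single k 1 : EuclideanSpace ℝ (Fin m)), (0 : EuclideanSpace ℝ (Fin n))) = 2 * w.1 k := by
  simp [LX, cx_apply, EuclideanSpace.single_apply, mul_ite]

lemma LX_sy (w : E m n) (k : Fin n) :
    LX w ((0 : EuclideanSpace ℝ (Fin m)), (EuclideanSpace.single k 1 : EuclideanSpace ℝ (Fin n))) = 0 := by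
  simp [LX, cx_apply]

lemma LY_sx (w : E m n) (k : Fin m) :
    LY w ((EuclideanSpace.single k 1 : EuclideanSpace ℝ (Fin m)), (0 : EuclideanSpace ℝ (Fin n))) = 0 := by
  simp [LY, cy_apply]

lemma LY_sy (w : E m n) (k : Fin n) :
    LY w ((0 : EuclideanSpace ℝ (Fin m)), (EuclideanSpace.single k 1 : EuclideanSpace ℝ (Fin n))) = 2 * w.2 k := by
  simp [LY, cy_apply, EuclideanSpace.single_apply, mul_ite]

lemma LF_sx (α : ℝ) (w : E m n) (k : Fin m) :
    LF α w ((EuclideanSpace.single k 1 : EuclideanSpace ℝ (Fin m)), (0 : EuclideanSpace ℝ (Fin n)))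
      = (α+1) * gX w ^ α * (2 * w.1 k) := by
  simp [LF, LX_sx, LY_sx]

lemma LF_sy (α : ℝ) (w : E m n) (k : Fin n) :
    LF α w ((0 : EuclideanSpace ℝ (Fin m)), (EuclideanSpace.single k 1 : EuclideanSpace ℝ (Fin n)))
      = (α+1)^2 * (2 * w.2 k) := by
  simp [LF, LX_sy, LY_sy]

-- derivatives

lemma hasFDerivAt_gX (w : E m n) : HasFDerivAt gX (LX w) w := by
  unfold gX LX
  refine HasFDerivAt.fun_sum fun i _ => ?_
  have h0 : HasFDerivAt (fun w : E m n => w.1 i) (cx i) w := (cx i).hasFDerivAt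
  simpa [two_mul, add_smul] using h0.fun_mul h0

lemma hasFDerivAt_gY (w : E m n) : HasFDerivAt gY (LY w) w := by
  unfold gY LY
  refine HasFDerivAt.fun_sum fun j _ => ?_
  have h0 : HasFDerivAt (fun w : E m n => w.2 j) (cy j) w := (cy j).hasFDerivAt
  simpa [two_mul, add_smul] using h0.fun_mul h0

lemma hasFDerivAt_Fg (α : ℝ) (w : E m n) (hw : w.1 ≠ 0) :
    HasFDerivAt (Fg α) (LF α w) w := by
  have h1 := (hasFDerivAt_gX w).rpow_const (p := α+1) (Or.inl (gX_pos hw).ne')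
  have h2 := (hasFDerivAt_gY w).const_mul ((α+1)^2)
  have h := h1.add h2
  rw [add_sub_cancel_right] at h
  exact h

lemma hasFDerivAt_rho_rpow (α : ℝ) (γ : ℝ) (w : E m n) (hw : w.1 ≠ 0) :
    HasFDerivAt (fun w : E m n => rho α w ^ γ)
      ((γ/(2*(α+1)) * Fg α w ^ (γ/(2*(α+1)) - 1)) • LF α w) w := by
  have h := (hasFDerivAt_Fg α w hw).rpow_const (p := γ/(2*(α+1))) (Or.inl (Fg_pos hw).ne')
  have e : (fun w : E m n => rho α w ^ γ) = fun w => Fg α w ^ (γ/(2*(α+1))) :=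
    funext (rho_rpow α γ)
  rw [e]; exact h

lemma fderiv_x (α : ℝ) (hα : 0 < α) (γ : ℝ) (w : E m n) (hw : w.1 ≠ 0) (k : Fin m) :
    fderiv ℝ (fun w : E m n => rho α w ^ γ) w
        ((EuclideanSpace.single k 1 : EuclideanSpace ℝ (Fin m)), (0 : EuclideanSpace ℝ (Fin n)))
      = γ * (Fg α w ^ (γ/(2*(α+1)) - 1) * (gX w ^ α * w.1 k)) := by
  have hα1 : α + 1 ≠ 0 := by positivity
  rw [(hasFDerivAt_rho_rpow α γ w hw).fderiv, ContinuousLinearMap.smul_apply, LF_sx,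
    smul_eq_mul]
  field_simp

lemma fderiv_y (α : ℝ) (hα : 0 < α) (γ : ℝ) (w : E m n) (hw : w.1 ≠ 0) (k : Fin n) :
    fderiv ℝ (fun w : E m n => rho α w ^ γ) w
        ((0 : EuclideanSpace ℝ (Fin m)), (EuclideanSpace.single k 1 : EuclideanSpace ℝ (Fin n)))
      = γ * (Fg α w ^ (γ/(2*(α+1)) - 1) * ((α+1) * w.2 k)) := by
  have hα1 : α + 1 ≠ 0 := by positivity
  rw [(hasFDerivAt_rho_rpow α γ w hw).fderiv, ContinuousLinearMap.smul_apply, LF_sy,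
    smul_eq_mul]
  field_simp

lemma mem_nhds {z : E m n} (hz : z.1 ≠ 0) : {w : E m n | w.1 ≠ 0} ∈ nhds z :=
  (isOpen_compl_singleton.preimage continuous_fst).mem_nhds hz

lemma sd_x (α : ℝ) (hα : 0 < α) (γ : ℝ) (z : E m n) (hz : z.1 ≠ 0) (i : Fin m) :
    fderiv ℝ (fun w : E m n => fderiv ℝ (fun w : E m n => rho α w ^ γ) w
        ((EuclideanSpace.single i 1 : EuclideanSpace ℝ (Fin m)), (0 : EuclideanSpace ℝ (Fin n)))) z
        ((EuclideanSpace.single i 1 : EuclideanSpace ℝ (Fin m)), (0 : EuclideanSpace ℝ (Fin n)))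
      = γ * (Fg α z ^ (γ/(2*(α+1)) - 1) * gX z ^ α)
        + (2*γ*α * Fg α z ^ (γ/(2*(α+1)) - 1) * gX z ^ (α-1)
           + 2*γ*((γ/(2*(α+1))) - 1)*(α+1) * Fg α z ^ (γ/(2*(α+1)) - 1 - 1) * (gX z ^ α * gX z ^ α))
          * (z.1 i * z.1 i) := by
  set β := γ/(2*(α+1)) with hβ
  have hev : (fun w : E m n => fderiv ℝ (fun w : E m n => rho α w ^ γ) w
        ((EuclideanSpace.single i 1 : EuclideanSpace ℝ (Fin m)), (0 : EuclideanSpace ℝ (Fin n))))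
      =ᶠ[nhds z] (fun w : E m n => γ * (Fg α w ^ (β - 1) * (gX w ^ α * w.1 i))) :=
    Filter.eventuallyEq_of_mem (mem_nhds hz) (fun w hw => fderiv_x α hα γ w hw i)
  rw [hev.fderiv_eq]
  have h1 : HasFDerivAt (fun w : E m n => Fg α w ^ (β-1)) (((β-1) * Fg α z ^ (β-1-1)) • LF α z) z :=
    (hasFDerivAt_Fg α z hz).rpow_const (Or.inl (Fg_pos hz).ne')
  have h2 : HasFDerivAt (fun w : E m n => gX w ^ α) ((α * gX z ^ (α-1)) • LX z) z :=
    (hasFDerivAt_gX z).rpow_const (Or.inl (gX_pos hz).ne')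
  have h3 : HasFDerivAt (fun w : E m n => w.1 i) (cx i) z := (cx i).hasFDerivAt
  have h4 := (h1.fun_mul (h2.fun_mul h3)).const_mul γ
  rw [h4.fderiv]
  simp only [ContinuousLinearMap.smul_apply, ContinuousLinearMap.add_apply, smul_eq_mul,
    LF_sx, LX_sx, cx_apply, EuclideanSpace.single_apply, eq_self_iff_true, if_true]
  ring

lemma sd_y (α : ℝ) (hα : 0 < α) (γ : ℝ) (z : E m n) (hz : z.1 ≠ 0) (j : Fin n) :
    fderiv ℝ (fun w : E m n => fderiv ℝ (fun w : E m n => rho α w ^ γ) w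
        ((0 : EuclideanSpace ℝ (Fin m)), (EuclideanSpace.single j 1 : EuclideanSpace ℝ (Fin n)))) z
        ((0 : EuclideanSpace ℝ (Fin m)), (EuclideanSpace.single j 1 : EuclideanSpace ℝ (Fin n)))
      = γ * (α+1) * Fg α z ^ (γ/(2*(α+1)) - 1)
        + (2*γ*((γ/(2*(α+1))) - 1)*(α+1)^3 * Fg α z ^ (γ/(2*(α+1)) - 1 - 1)) * (z.2 j * z.2 j) := by
  set β := γ/(2*(α+1)) with hβ
  have hev : (fun w : E m n => fderiv ℝ (fun w : E m n => rho α w ^ γ) w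
        ((0 : EuclideanSpace ℝ (Fin m)), (EuclideanSpace.single j 1 : EuclideanSpace ℝ (Fin n))))
      =ᶠ[nhds z] (fun w : E m n => γ * (Fg α w ^ (β - 1) * ((α+1) * w.2 j))) :=
    Filter.eventuallyEq_of_mem (mem_nhds hz) (fun w hw => fderiv_y α hα γ w hw j)
  rw [hev.fderiv_eq]
  have h1 : HasFDerivAt (fun w : E m n => Fg α w ^ (β-1)) (((β-1) * Fg α z ^ (β-1-1)) • LF α z) z :=
    (hasFDerivAt_Fg α z hz).rpow_const (Or.inl (Fg_pos hz).ne')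
  have h3 : HasFDerivAt (fun w : E m n => (α+1) * w.2 j) ((α+1) • cy j) z :=
    ((cy j).hasFDerivAt).const_mul (α+1)
  have h4 := (h1.fun_mul h3).const_mul γ
  rw [h4.fderiv]
  simp only [ContinuousLinearMap.smul_apply, ContinuousLinearMap.add_apply, smul_eq_mul,
    LF_sy, cy_apply, EuclideanSpace.single_apply, eq_self_iff_true, if_true]
  ring

lemma normx_rpow (α : ℝ) (z : E m n) : ‖z.1‖^(2*α) = gX z ^ α := by
  rw [Real.rpow_mul (norm_nonneg _), Real.rpow_two, ← gX_eq]

lemma rhs_eq (α : ℝ) (hα : 0 < α) (γ : ℝ) (z : E m n) (hz : z.1 ≠ 0) :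
    rho α z ^ (γ-2) * psi α z = gX z ^ α * Fg α z ^ (γ/(2*(α+1)) - 1) := by
  have hα1 : (2*(α+1)) ≠ 0 := by positivity
  unfold psi
  rw [rho_rpow α (γ-2), rho_rpow α (2*α), normx_rpow]
  rw [show Fg α z ^ ((γ-2)/(2*(α+1))) * (gX z ^ α / Fg α z ^ (2*α/(2*(α+1))))
      = gX z ^ α * (Fg α z ^ ((γ-2)/(2*(α+1))) / Fg α z ^ (2*α/(2*(α+1)))) from by ring,
    ← Real.rpow_sub (Fg_pos hz)]
  congr 2
  field_simp
  ring

lemma main (α : ℝ) (hα : 0 < α) (z : E m n) (hz : z.1 ≠ 0) (γ : ℝ) :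
    lapX α (fun w => rho α w ^ γ) z
      = γ * (((m : ℝ) + (α+1) * n) - 2 + γ) * (rho α z) ^ (γ - 2) * psi α z := by
  have hα1 : α + 1 ≠ 0 := by positivity
  have e2 : gX z ^ α = gX z ^ (α-1) * gX z := by
    rw [← Real.rpow_add_one (gX_pos hz).ne']; congr 1; ring
  have e1 : Fg α z ^ (γ/(2*(α+1)) - 1) = Fg α z ^ (γ/(2*(α+1)) - 1 - 1) * Fg α z := by
    rw [← Real.rpow_add_one (Fg_pos hz).ne']; congr 1; ring
  have e3 : Fg α z = gX z ^ (α-1) * gX z * gX z + (α+1)^2 * gY z := by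
    have h' : gX z ^ (α+1) = gX z ^ α * gX z := by
      rw [← Real.rpow_add_one (gX_pos hz).ne']
    unfold Fg; rw [h', e2]
  unfold lapX
  rw [Finset.sum_congr rfl (fun i _ => sd_x α hα γ z hz i),
      Finset.sum_congr rfl (fun j _ => sd_y α hα γ z hz j)]
  rw [Finset.sum_add_distrib, Finset.sum_add_distrib, Finset.sum_const, Finset.sum_const,
      ← Finset.mul_sum, ← Finset.mul_sum]
  rw [show (∑ i, z.1 i * z.1 i) = gX z from rfl, show (∑ j, z.2 j * z.2 j) = gY z from rfl]
  rw [mul_assoc (γ * (((m : ℝ) + (α+1) * n) - 2 + γ)), rhs_eq α hα γ z hz, normx_rpow]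
  simp only [Finset.card_univ, Fintype.card_fin, nsmul_eq_mul]
  rw [e1, e2, e3]
  field_simp
  ring

end BG

/-- `Δ_X (ρ^γ) = γ(Q−2+γ) ρ^{γ−2} ψ` on `{x ≠ 0}`; in particular
`Δ_X (ρ^{−4}) = −4(Q−6) ρ^{−6} ψ`. -/
theorem lapX_rho_pow {m n : ℕ} (hm : 1 ≤ m) (hn : 1 ≤ n) (α : ℝ) (hα : 0 < α)
    (z : E m n) (hz : z.1 ≠ 0) :
    (∀ γ : ℝ, lapX α (fun w => rho α w ^ γ) z
      = γ * (((m : ℝ) + (α+1) * n) - 2 + γ) * (rho α z) ^ (γ - 2) * psi α z) ∧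
    lapX α (fun w => rho α w ^ (-4 : ℝ)) z
      = -4 * (((m : ℝ) + (α+1) * n) - 6) * (rho α z) ^ (-6 : ℝ) * psi α z := by
  constructor
  · exact fun γ => BG.main α hα z hz γ
  · have h := BG.main α hα z hz (-4)
    rw [show ((-4:ℝ) - 2) = -6 by norm_num] at h
    rw [h]
    ring
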